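/- Let L₁ ⊆ A* and L₂ ⊆ B* be automatic structures for surjective monoid homomorphisms π₁ : A* → G and π₂ : B* → G onto the same group G. Then L₁ and L₂ are equivalent if and only if L₁ ∪ L₂ has the Hausdorff closeness property with respect to the natural map π₃ : (A ⊔ B)* → G and the word metric d_{A⊔B}. -/

import Mathlib

open scoped NNReal

namespace Auto

/-- The generating set `Aπ ∪ (Aπ)⁻¹` of `G` determined by `π : A* → G`. -/
def gens {A G : Type*} [Group G] (π : FreeMonoid A →* G) : Set G :=
  (Set.range fun a : A => π (FreeMonoid.of a)) ∪
    Set.range fun a : A => (π (FreeMonoid.of a))⁻¹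

/-- The word metric `d_A` on `G`: the least `n` such that `g⁻¹h` is a product of `n`
elements of `Aπ ∪ (Aπ)⁻¹`. -/
noncomputable def wdist {A G : Type*} [Group G] (π : FreeMonoid A →* G) (g h : G) : ℕ :=
  sInf {n : ℕ | ∃ l : List G, l.length = n ∧ (∀ x ∈ l, x ∈ gens π) ∧ l.prod = g⁻¹ * h}

/-- Evaluation of a word of `A*` in `G`. -/
def evalW {A G : Type*} [Group G] (π : FreeMonoid A →* G) (w : List A) : G :=
  π (FreeMonoid.ofList w)

/-- `u` and `v` `p`-fellow travel: `d_A(u^[n]π, v^[n]π) ≤ p` for all `n`. -/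
def FellowTravel {A G : Type*} [Group G] (π : FreeMonoid A →* G) (p : ℝ≥0)
    (u v : List A) : Prop :=
  ∀ n : ℕ, (wdist π (evalW π (u.take n)) (evalW π (v.take n)) : ℝ≥0) ≤ p

/-- `u` and `v` are `p`-meeting-fellow-travellers. -/
def MFT {A G : Type*} [Group G] (π : FreeMonoid A →* G) (p : ℝ≥0) (u v : List A) : Prop :=
  FellowTravel π p u v ∧ evalW π u = evalW π v

/-- A language is regular if it is accepted by a finite-state automaton. -/
def IsRegular {A : Type*} (L : Language A) : Prop :=
  ∃ (σ : Type) (_ : Fintype σ) (M : DFA A σ), M.accepts = L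

/-- `L` is an automatic structure for `π`. -/
structure IsAutomaticStructure {A G : Type*} [Group G] (π : FreeMonoid A →* G)
    (L : Language A) : Prop where
  regular : IsRegular L
  onto : ∀ g : G, ∃ w ∈ L, evalW π w = g
  ft : ∃ N : ℕ, ∀ u ∈ L, ∀ v ∈ L,
    wdist π (evalW π u) (evalW π v) ≤ 1 → FellowTravel π N u v

/-- Evaluation of an element of `A ∪ {ε}`. -/
def evalOpt {A G : Type*} [Group G] (π : FreeMonoid A →* G) : Option A → G
  | none => 1
  | some a => π (FreeMonoid.of a)

/-- `L` is a biautomatic structure for `π`. -/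
structure IsBiautomaticStructure {A G : Type*} [Group G] (π : FreeMonoid A →* G)
    (L : Language A) extends IsAutomaticStructure π L : Prop where
  bi : ∃ N : ℕ, ∀ u ∈ L, ∀ v ∈ L, ∀ a : Option A,
    evalW π v = evalOpt π a * evalW π u →
    ∀ n : ℕ, wdist π (evalOpt π a * evalW π (u.take n)) (evalW π (v.take n)) ≤ N

/-- A language is factorial if it is closed under taking factors. -/
def IsFactorial {A : Type*} (L : Language A) : Prop :=
  ∀ u ∈ L, ∀ v : List A, v <:+: u → v ∈ L

/-- `D : ℝ≥0 → ℝ≥0` is a departure function for `(G, L)`. -/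
def IsDepartureFunction {A G : Type*} [Group G] (π : FreeMonoid A →* G) (L : Language A)
    (D : ℝ≥0 → ℝ≥0) : Prop :=
  ∀ w ∈ L, ∀ r : ℝ≥0, ∀ s t : ℕ, D r ≤ (t : ℝ≥0) → s + t ≤ w.length →
    r < (wdist π (evalW π (w.take s)) (evalW π (w.take (s + t))) : ℝ≥0)

/-- Every point of `S` is within distance `N` of `T`. -/
def NbhdIn {A G : Type*} [Group G] (π : FreeMonoid A →* G) (N : ℕ) (S T : Set G) : Prop :=
  ∀ s ∈ S, ∃ t ∈ T, wdist π s t ≤ N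

/-- The Hausdorff distance between `S` and `T` is at most `N`. -/
def HausdorffLE {A G : Type*} [Group G] (π : FreeMonoid A →* G) (N : ℕ)
    (S T : Set G) : Prop :=
  NbhdIn π N S T ∧ NbhdIn π N T S

/-- `H` is an `L`-quasiconvex subgroup of `G`. -/
def IsQuasiconvex {A G : Type*} [Group G] (π : FreeMonoid A →* G) (L : Language A)
    (H : Subgroup G) : Prop :=
  ∃ k : ℕ, ∀ h ∈ H, ∀ h' ∈ H, ∀ w ∈ L, h * evalW π w = h' →
    ∀ n : ℕ, ∃ z ∈ H, wdist π (h * evalW π (w.take n)) z ≤ k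

/-- The bounded reduction property for `(φ, L, L')`. -/
def BRP {A B G G' : Type*} [Group G] [Group G'] (π : FreeMonoid A →* G)
    (π' : FreeMonoid B →* G') (φ : G →* G') (L : Language A) (L' : Language B) : Prop :=
  ∃ N : ℕ, ∀ x : G, ∀ α ∈ L, ∀ β ∈ L', evalW π' β = φ (evalW π α) →
    HausdorffLE π' N (Set.range fun n : ℕ => φ (x * evalW π (α.take n)))
      (Set.range fun n : ℕ => φ x * evalW π' (β.take n))

/-- The synchronous bounded reduction property for `(φ, L, L')`. -/
def SyncBRP {A B G G' : Type*} [Group G] [Group G'] (π : FreeMonoid A →* G)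
    (π' : FreeMonoid B →* G') (φ : G →* G') (L : Language A) (L' : Language B) : Prop :=
  ∃ N : ℕ, ∀ x : G, ∀ α ∈ L, ∀ β ∈ L', evalW π' β = φ (evalW π α) →
    ∀ n : ℕ, wdist π' (φ (x * evalW π (α.take n))) (φ x * evalW π' (β.take n)) ≤ N

/-- The fellow traveller bounded reduction property (FT-BRP) for `(φ, L, L')`. -/
def FTBRP {A B G G' : Type*} [Group G] [Group G'] (π : FreeMonoid A →* G)
    (π' : FreeMonoid B →* G') (φ : G →* G') (L : Language A) (L' : Language B) : Prop :=
  ∀ p : ℝ≥0, ∃ q : ℝ≥0,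
    ∀ u₁ ∈ L, ∀ u₂ ∈ L, ∀ u₃ ∈ L, ∀ u₁' ∈ L', ∀ u₂' ∈ L', ∀ u₃' ∈ L',
      evalW π' u₁' = φ (evalW π u₁) → evalW π' u₂' = φ (evalW π u₂) →
        evalW π' u₃' = φ (evalW π u₃) →
          MFT π p (u₁ ++ u₂) u₃ → MFT π' q (u₁' ++ u₂') u₃'

/-- The natural homomorphism `(A ⊔ B)* → G` agreeing with `π₁` on `A` and `π₂` on `B`. -/
def sumHom {A B G : Type*} [Group G] (π₁ : FreeMonoid A →* G) (π₂ : FreeMonoid B →* G) :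
    FreeMonoid (A ⊕ B) →* G :=
  FreeMonoid.lift (Sum.elim (fun a => π₁ (FreeMonoid.of a)) fun b => π₂ (FreeMonoid.of b))

/-- The union `L₁ ∪ L₂` viewed as a language over `A ⊔ B`. -/
def unionLang {A B : Type*} (L₁ : Language A) (L₂ : Language B) : Language (A ⊕ B) :=
  {w : List (A ⊕ B) | (∃ u ∈ L₁, w = u.map Sum.inl) ∨ ∃ v ∈ L₂, w = v.map Sum.inr}

/-- `L` is an asynchronous automatic structure for `π`. -/
def IsAsyncAutomaticStructure {A G : Type*} [Group G] (π : FreeMonoid A →* G)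
    (L : Language A) : Prop :=
  IsRegular L ∧ (∀ g : G, ∃ w ∈ L, evalW π w = g) ∧
    ∃ p : ℕ, ∀ u ∈ L, ∀ v ∈ L, wdist π (evalW π u) (evalW π v) ≤ 1 →
      ∃ φ ψ : ℕ → ℕ, Monotone φ ∧ Monotone ψ ∧
        Function.Surjective φ ∧ Function.Surjective ψ ∧
          ∀ t : ℕ, wdist π (evalW π (u.take (φ t))) (evalW π (v.take (ψ t))) ≤ p

/-- `L₁` and `L₂` are equivalent automatic structures. -/
def LangEquivalent {A B G : Type*} [Group G] (π₁ : FreeMonoid A →* G)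
    (π₂ : FreeMonoid B →* G) (L₁ : Language A) (L₂ : Language B) : Prop :=
  IsAsyncAutomaticStructure (sumHom π₁ π₂) (unionLang L₁ L₂)

/-- `L₁` and `L₂` are synchronously equivalent automatic structures. -/
def LangSyncEquivalent {A B G : Type*} [Group G] (π₁ : FreeMonoid A →* G)
    (π₂ : FreeMonoid B →* G) (L₁ : Language A) (L₂ : Language B) : Prop :=
  IsAutomaticStructure (sumHom π₁ π₂) (unionLang L₁ L₂)

/-- `L` has the Hausdorff closeness property. -/
def HausClose {A G : Type*} [Group G] (π : FreeMonoid A →* G) (L : Language A) : Prop :=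
  ∃ N : ℕ, ∀ u ∈ L, ∀ v ∈ L, wdist π (evalW π u) (evalW π v) ≤ 1 →
    HausdorffLE π N (Set.range fun n : ℕ => evalW π (u.take n))
      (Set.range fun n : ℕ => evalW π (v.take n))

/-- The padded alphabet `C = (A×B) ∪ (A×{$}) ∪ ({$}×B)` of convolution. -/
abbrev ConvAlphabet (A B : Type*) := (A × B) ⊕ (A ⊕ B)

/-- The convolution `u ⋄ v` of two words. -/
def conv {A B : Type*} : List A → List B → List (ConvAlphabet A B)
  | [], [] => []
  | [], b :: v => Sum.inr (Sum.inr b) :: conv [] v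
  | a :: u, [] => Sum.inr (Sum.inl a) :: conv u []
  | a :: u, b :: v => Sum.inl (a, b) :: conv u v
  termination_by u v => u.length + v.length

/-- The convolution `L₁ ⋄ L₂` of two languages. -/
def convLang {A B : Type*} (L₁ : Language A) (L₂ : Language B) :
    Language (ConvAlphabet A B) :=
  {w : List (ConvAlphabet A B) | ∃ u ∈ L₁, ∃ v ∈ L₂, w = conv u v}

/-- The natural homomorphism `C* → G × G'` for the convolution alphabet. -/
def convHom {A B G G' : Type*} [Group G] [Group G'] (π₁ : FreeMonoid A →* G)
    (π₂ : FreeMonoid B →* G') : FreeMonoid (ConvAlphabet A B) →* G × G' :=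
  FreeMonoid.lift fun c =>
    match c with
    | Sum.inl (a, b) => (π₁ (FreeMonoid.of a), π₂ (FreeMonoid.of b))
    | Sum.inr (Sum.inl a) => (π₁ (FreeMonoid.of a), 1)
    | Sum.inr (Sum.inr b) => (1, π₂ (FreeMonoid.of b))

/-- A group is automatic if it admits an automatic structure over some finite alphabet. -/
def IsAutomaticGroup (G : Type*) [Group G] : Prop :=
  ∃ (A : Type) (_ : Fintype A) (π : FreeMonoid A →* G) (L : Language A),
    IsAutomaticStructure π L

end Auto

open Auto

namespace Auto

section Basics

variable {A G : Type*} [Group G]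

/-- The defining set for `wdist`. -/
def WSet (π : FreeMonoid A →* G) (g h : G) : Set ℕ :=
  {n : ℕ | ∃ l : List G, l.length = n ∧ (∀ x ∈ l, x ∈ gens π) ∧ l.prod = g⁻¹ * h}

lemma wdist_def (π : FreeMonoid A →* G) (g h : G) : wdist π g h = sInf (WSet π g h) := rfl

lemma wdist_le {π : FreeMonoid A →* G} {g h : G} {n : ℕ} (hn : n ∈ WSet π g h) :
    wdist π g h ≤ n := Nat.sInf_le hn

lemma gens_inv {π : FreeMonoid A →* G} {x : G} (hx : x ∈ gens π) : x⁻¹ ∈ gens π := by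
  rcases hx with h | h
  · obtain ⟨a, rfl⟩ := h
    exact Or.inr ⟨a, rfl⟩
  · obtain ⟨a, rfl⟩ := h
    exact Or.inl ⟨a, by simp⟩

lemma evalW_nil (π : FreeMonoid A →* G) : evalW π ([] : List A) = 1 := map_one π

lemma evalW_append (π : FreeMonoid A →* G) (u v : List A) :
    evalW π (u ++ v) = evalW π u * evalW π v := by
  rw [evalW, show FreeMonoid.ofList (u ++ v) = FreeMonoid.ofList u * FreeMonoid.ofList v from rfl,
    map_mul]; rfl

lemma evalW_cons (π : FreeMonoid A →* G) (x : A) (xs : List A) :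
    evalW π (x :: xs) = π (FreeMonoid.of x) * evalW π xs := by
  rw [show (x :: xs) = [x] ++ xs from rfl, evalW_append]; rfl

lemma prod_map_of (π : FreeMonoid A →* G) (l : List A) :
    (l.map fun a => π (FreeMonoid.of a)).prod = evalW π l := by
  induction l with
  | nil => simp [evalW_nil]
  | cons x xs ih => simp [evalW_cons, ih]

lemma wdist_self (π : FreeMonoid A →* G) (g : G) : wdist π g g = 0 :=
  Nat.le_zero.mp (wdist_le ⟨[], rfl, by simp, by simp⟩)

lemma wset_nonempty {π : FreeMonoid A →* G} (hπ : Function.Surjective π) (g h : G) :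
    (WSet π g h).Nonempty := by
  obtain ⟨w, hw⟩ := hπ (g⁻¹ * h)
  refine ⟨(FreeMonoid.toList w).length,
    (FreeMonoid.toList w).map (fun a => π (FreeMonoid.of a)), by simp, ?_, ?_⟩
  · intro x hx
    simp only [List.mem_map] at hx
    obtain ⟨a, _, rfl⟩ := hx
    exact Or.inl ⟨a, rfl⟩
  · rw [prod_map_of, ← hw]
    rfl

lemma wset_symm {π : FreeMonoid A →* G} {g h : G} {n : ℕ} (hn : n ∈ WSet π g h) :
    n ∈ WSet π h g := by
  obtain ⟨l, hlen, hmem, hprod⟩ := hn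
  refine ⟨(l.map fun x => x⁻¹).reverse, by simp [hlen], ?_, ?_⟩
  · intro x hx
    simp only [List.mem_reverse, List.mem_map] at hx
    obtain ⟨y, hy, rfl⟩ := hx
    exact gens_inv (hmem y hy)
  · rw [← List.prod_inv_reverse, hprod]
    simp

lemma wdist_comm (π : FreeMonoid A →* G) (g h : G) : wdist π g h = wdist π h g := by
  unfold wdist
  congr 1
  ext n
  exact ⟨fun hn => wset_symm hn, fun hn => wset_symm hn⟩

lemma wdist_triangle {π : FreeMonoid A →* G} (hπ : Function.Surjective π) (g h k : G) :
    wdist π g k ≤ wdist π g h + wdist π h k := by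
  obtain ⟨l₁, hlen₁, hmem₁, hprod₁⟩ := Nat.sInf_mem (wset_nonempty hπ g h)
  obtain ⟨l₂, hlen₂, hmem₂, hprod₂⟩ := Nat.sInf_mem (wset_nonempty hπ h k)
  refine wdist_le ⟨l₁ ++ l₂, by rw [List.length_append, hlen₁, hlen₂]; rfl, ?_, ?_⟩
  · intro x hx
    rcases List.mem_append.mp hx with h' | h'
    · exact hmem₁ x h'
    · exact hmem₂ x h'
  · rw [List.prod_append, hprod₁, hprod₂]
    group

lemma wdist_one (π : FreeMonoid A →* G) (g h : G) : wdist π g h = wdist π 1 (g⁻¹ * h) := by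
  unfold wdist
  congr 1
  ext n
  constructor <;> (rintro ⟨l, h1, h2, h3⟩; exact ⟨l, h1, h2, by simpa using h3⟩)

end Basics

end Auto
namespace Auto

section Paths

variable {A G : Type*} [Group G]

/-- One step along a word moves by at most one generator. -/
lemma path_step (π : FreeMonoid A →* G) (w : List A) (n : ℕ) :
    wdist π (evalW π (w.take n)) (evalW π (w.take (n + 1))) ≤ 1 := by
  by_cases h : n < w.length
  · rw [List.take_succ]
    have h' : w[n]?.toList = [w[n]] := by simp [List.getElem?_eq_getElem h]
    rw [h', evalW_append]
    refine wdist_le ⟨[π (FreeMonoid.of w[n])], rfl, ?_, ?_⟩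
    · intro x hx
      simp only [List.mem_singleton] at hx
      subst hx
      exact Or.inl ⟨w[n], rfl⟩
    · simp [evalW_cons, evalW_nil]
  · push_neg at h
    rw [List.take_of_length_le h, List.take_of_length_le (by omega)]
    exact le_of_eq_of_le (wdist_self π _) (by omega)

/-- Segments: distance along a word is at most the number of letters. -/
lemma path_lip (π : FreeMonoid A →* G) (w : List A) (m k : ℕ) :
    wdist π (evalW π (w.take m)) (evalW π (w.take (m + k))) ≤ k := by
  rw [List.take_add, evalW_append]
  set seg := (w.drop m).take k with hseg
  refine le_trans (wdist_le (n := seg.length) ⟨seg.map fun a => π (FreeMonoid.of a), by simp, ?_, ?_⟩) ?_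
  · intro x hx
    simp only [List.mem_map] at hx
    obtain ⟨a, _, rfl⟩ := hx
    exact Or.inl ⟨a, rfl⟩
  · rw [prod_map_of]
    group
  · simp [hseg]

lemma path_lip' (π : FreeMonoid A →* G) (w : List A) {m m' : ℕ} (h : m ≤ m') :
    wdist π (evalW π (w.take m)) (evalW π (w.take m')) ≤ m' - m := by
  have := path_lip π w m (m' - m)
  rwa [Nat.add_sub_cancel' h] at this

lemma path_const (π : FreeMonoid A →* G) (w : List A) {n : ℕ} (h : w.length ≤ n) :
    evalW π (w.take n) = evalW π (w.take w.length) := by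
  rw [List.take_of_length_le h, List.take_of_length_le le_rfl]

/-- Finiteness of balls in the word metric. -/
lemma ball_finite {π : FreeMonoid A →* G} [Finite A] (r : ℕ) :
    {g : G | wdist π 1 g ≤ r ∧ (WSet π 1 g).Nonempty}.Finite := by
  induction r with
  | zero =>
    refine Set.Finite.subset (Set.finite_singleton 1) ?_
    rintro g ⟨hg, hne⟩
    have h0 : wdist π 1 g = 0 := Nat.le_zero.mp hg
    obtain ⟨l, hlen, -, hprod⟩ := Nat.sInf_mem hne
    rw [← wdist_def, h0] at hlen
    rw [List.length_eq_zero_iff] at hlen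
    subst hlen
    simp only [List.prod_nil, inv_one, one_mul] at hprod
    simp [← hprod]
  | succ r ih =>
    have hgens : (gens π).Finite := (Set.finite_range _).union (Set.finite_range _)
    refine Set.Finite.subset (Set.Finite.union
      (ih.image (fun g => g)) ((hgens.biUnion (fun x _ => ih.image (fun g => g * x))))) ?_
    rintro g ⟨hg, hne⟩
    obtain ⟨l, hlen, hmem, hprod⟩ := Nat.sInf_mem hne
    rw [← wdist_def] at hlen
    rcases List.eq_nil_or_concat l with rfl | ⟨l₀, x, rfl⟩
    · left
      have hg1 : g = 1 := by simpa using hprod.symm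
      subst hg1
      have h0 : wdist π 1 (1 : G) = 0 := wdist_self π 1
      exact ⟨1, ⟨by omega, hne⟩, rfl⟩
    · right
      simp only [List.concat_eq_append, List.prod_append, List.prod_cons, List.prod_nil,
        mul_one, inv_one, one_mul] at hprod
      simp only [List.concat_eq_append, List.length_append, List.length_cons,
        List.length_nil] at hlen
      have hx : x ∈ gens π := hmem x (by simp)
      have hmem' : l₀.length ∈ WSet π 1 l₀.prod :=
        ⟨l₀, rfl, fun y hy => hmem y (by simp [hy]), by simp⟩
      have hl₀ : l₀.prod ∈ {g : G | wdist π 1 g ≤ r ∧ (WSet π 1 g).Nonempty} := by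
        constructor
        · refine le_trans (wdist_le hmem') ?_
          omega
        · exact ⟨l₀.length, hmem'⟩
      exact Set.mem_biUnion hx ⟨l₀.prod, hl₀, hprod⟩

end Paths

section SumLemmas

variable {A B G : Type*} [Group G]
variable (π₁ : FreeMonoid A →* G) (π₂ : FreeMonoid B →* G)

lemma sumHom_of_inl (a : A) : sumHom π₁ π₂ (FreeMonoid.of (Sum.inl a)) = π₁ (FreeMonoid.of a) := by
  simp [sumHom]

lemma sumHom_of_inr (b : B) : sumHom π₁ π₂ (FreeMonoid.of (Sum.inr b)) = π₂ (FreeMonoid.of b) := by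
  simp [sumHom]

lemma evalW_map_inl (u : List A) :
    evalW (sumHom π₁ π₂) (u.map Sum.inl) = evalW π₁ u := by
  induction u with
  | nil => simp [evalW_nil]
  | cons x xs ih => simp [evalW_cons, ih, sumHom_of_inl]

lemma evalW_map_inr (v : List B) :
    evalW (sumHom π₁ π₂) (v.map Sum.inr) = evalW π₂ v := by
  induction v with
  | nil => simp [evalW_nil]
  | cons x xs ih => simp [evalW_cons, ih, sumHom_of_inr]

lemma sumHom_surjective (hπ₁ : Function.Surjective π₁) :
    Function.Surjective (sumHom π₁ π₂) := by
  intro g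
  obtain ⟨w, hw⟩ := hπ₁ g
  refine ⟨FreeMonoid.ofList (((FreeMonoid.toList w).map Sum.inl : List (A ⊕ B))), ?_⟩
  have : evalW (sumHom π₁ π₂) ((FreeMonoid.toList w).map Sum.inl) = evalW π₁ (FreeMonoid.toList w) :=
    evalW_map_inl π₁ π₂ _
  rw [evalW] at this
  rw [this]
  rw [← hw]
  rfl

lemma gens_inl_subset : gens π₁ ⊆ gens (sumHom π₁ π₂) := by
  rintro x (⟨a, rfl⟩ | ⟨a, rfl⟩)
  · exact Or.inl ⟨Sum.inl a, sumHom_of_inl π₁ π₂ a⟩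
  · exact Or.inr ⟨Sum.inl a, by simp [sumHom]⟩

lemma gens_inr_subset : gens π₂ ⊆ gens (sumHom π₁ π₂) := by
  rintro x (⟨a, rfl⟩ | ⟨a, rfl⟩)
  · exact Or.inl ⟨Sum.inr a, sumHom_of_inr π₁ π₂ a⟩
  · exact Or.inr ⟨Sum.inr a, by simp [sumHom]⟩

lemma wdist_le_of_gens_subset {A' : Type*} {π : FreeMonoid A' →* G} {π' : FreeMonoid A →* G}
    (hsub : gens π' ⊆ gens π) (hne : Function.Surjective π') (g h : G) :
    wdist π g h ≤ wdist π' g h := by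
  obtain ⟨l, hlen, hmem, hprod⟩ := Nat.sInf_mem (wset_nonempty hne g h)
  exact le_trans (wdist_le ⟨l, rfl, fun x hx => hsub (hmem x hx), hprod⟩) (le_of_eq hlen)

end SumLemmas

end Auto
namespace Auto

section UnionDFA

open scoped Classical

variable {A B : Type*}

/-- DFA for the union language over the disjoint sum alphabet. -/
def unionDFA {σ₁ σ₂ : Type} (M₁ : DFA A σ₁) (M₂ : DFA B σ₂) :
    DFA (A ⊕ B) (Option σ₁ × Option σ₂) where
  step := fun q c =>
    match c with
    | Sum.inl a => (q.1.map (fun s => M₁.step s a), none)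
    | Sum.inr b => (none, q.2.map (fun s => M₂.step s b))
  start := (some M₁.start, some M₂.start)
  accept := {q | (∃ s, q.1 = some s ∧ s ∈ M₁.accept) ∨ (∃ s, q.2 = some s ∧ s ∈ M₂.accept)}

variable {σ₁ σ₂ : Type} (M₁ : DFA A σ₁) (M₂ : DFA B σ₂)

lemma unionDFA_evalFrom_inl (u : List A) (q : Option σ₁ × Option σ₂) :
    (unionDFA M₁ M₂).evalFrom q (u.map Sum.inl) =
      (q.1.map (fun s => M₁.evalFrom s u), if u = [] then q.2 else none) := by
  induction u generalizing q with
  | nil => simp [DFA.evalFrom, Option.map_id']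
  | cons a u ih =>
    have hstep : (unionDFA M₁ M₂).evalFrom q ((a :: u).map Sum.inl) =
        (unionDFA M₁ M₂).evalFrom ((unionDFA M₁ M₂).step q (Sum.inl a)) (u.map Sum.inl) := rfl
    rw [hstep, ih]
    simp only [unionDFA]
    cases u <;> simp [Option.map_map, Function.comp_def, DFA.evalFrom]

lemma unionDFA_evalFrom_inr (v : List B) (q : Option σ₁ × Option σ₂) :
    (unionDFA M₁ M₂).evalFrom q (v.map Sum.inr) =
      (if v = [] then q.1 else none, q.2.map (fun s => M₂.evalFrom s v)) := by
  induction v generalizing q with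
  | nil => simp [DFA.evalFrom, Option.map_id']
  | cons a v ih =>
    have hstep : (unionDFA M₁ M₂).evalFrom q ((a :: v).map Sum.inr) =
        (unionDFA M₁ M₂).evalFrom ((unionDFA M₁ M₂).step q (Sum.inr a)) (v.map Sum.inr) := rfl
    rw [hstep, ih]
    simp only [unionDFA]
    cases v <;> simp [Option.map_map, Function.comp_def, DFA.evalFrom]

lemma unionDFA_none₁ (w : List (A ⊕ B)) (q : Option σ₁ × Option σ₂) (h : q.1 = none) :
    ((unionDFA M₁ M₂).evalFrom q w).1 = none := by
  induction w generalizing q with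
  | nil => simpa [DFA.evalFrom]
  | cons c w ih =>
    have hstep : (unionDFA M₁ M₂).evalFrom q (c :: w) =
        (unionDFA M₁ M₂).evalFrom ((unionDFA M₁ M₂).step q c) w := rfl
    rw [hstep]
    apply ih
    cases c <;> simp [unionDFA, h]

lemma unionDFA_none₂ (w : List (A ⊕ B)) (q : Option σ₁ × Option σ₂) (h : q.2 = none) :
    ((unionDFA M₁ M₂).evalFrom q w).2 = none := by
  induction w generalizing q with
  | nil => simpa [DFA.evalFrom]
  | cons c w ih =>
    have hstep : (unionDFA M₁ M₂).evalFrom q (c :: w) =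
        (unionDFA M₁ M₂).evalFrom ((unionDFA M₁ M₂).step q c) w := rfl
    rw [hstep]
    apply ih
    cases c <;> simp [unionDFA, h]

lemma unionDFA_fst_some (w : List (A ⊕ B)) (s : σ₁)
    (h : ((unionDFA M₁ M₂).eval w).1 = some s) : ∃ u : List A, w = u.map Sum.inl := by
  induction w with
  | nil => exact ⟨[], rfl⟩
  | cons c w ih =>
    cases c with
    | inl a =>
      have hstep : (unionDFA M₁ M₂).eval (Sum.inl a :: w) =
          (unionDFA M₁ M₂).evalFrom ((unionDFA M₁ M₂).step (unionDFA M₁ M₂).start (Sum.inl a)) w := rfl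
      -- the state after one inl step has the same "shape": fst = some _, snd = none
      -- we show w is all inl by a general lemma
      have : ∀ (q : Option σ₁ × Option σ₂) (w : List (A ⊕ B)) (s : σ₁),
          ((unionDFA M₁ M₂).evalFrom q w).1 = some s → ∃ u : List A, w = u.map Sum.inl := by
        intro q w
        induction w generalizing q with
        | nil => exact fun s _ => ⟨[], rfl⟩
        | cons c w ih2 =>
          intro s hs
          cases c with
          | inl a =>
            obtain ⟨u, hu⟩ := ih2 _ _ hs
            exact ⟨a :: u, by simp [hu]⟩
          | inr b =>
            exfalso
            have : ((unionDFA M₁ M₂).evalFrom ((unionDFA M₁ M₂).step q (Sum.inr b)) w).1 = none :=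
              unionDFA_none₁ M₁ M₂ w _ (by simp [unionDFA])
            rw [show (unionDFA M₁ M₂).evalFrom q (Sum.inr b :: w)
              = (unionDFA M₁ M₂).evalFrom ((unionDFA M₁ M₂).step q (Sum.inr b)) w from rfl] at hs
            rw [this] at hs
            exact nomatch hs
      exact this _ _ _ h
    | inr b =>
      exfalso
      have hnone : ((unionDFA M₁ M₂).eval (Sum.inr b :: w)).1 = none := by
        rw [show (unionDFA M₁ M₂).eval (Sum.inr b :: w)
          = (unionDFA M₁ M₂).evalFrom ((unionDFA M₁ M₂).step (unionDFA M₁ M₂).start (Sum.inr b)) w from rfl]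
        exact unionDFA_none₁ M₁ M₂ w _ (by simp [unionDFA])
      rw [hnone] at h
      exact nomatch h

lemma unionDFA_snd_some (w : List (A ⊕ B)) (s : σ₂)
    (h : ((unionDFA M₁ M₂).eval w).2 = some s) : ∃ v : List B, w = v.map Sum.inr := by
  induction w with
  | nil => exact ⟨[], rfl⟩
  | cons c w ih =>
    have gen : ∀ (q : Option σ₁ × Option σ₂) (w : List (A ⊕ B)) (s : σ₂),
        ((unionDFA M₁ M₂).evalFrom q w).2 = some s → ∃ v : List B, w = v.map Sum.inr := by
      intro q w
      induction w generalizing q with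
      | nil => exact fun s _ => ⟨[], rfl⟩
      | cons c w ih2 =>
        intro s hs
        cases c with
        | inr b =>
          obtain ⟨v, hv⟩ := ih2 _ _ hs
          exact ⟨b :: v, by simp [hv]⟩
        | inl a =>
          exfalso
          have : ((unionDFA M₁ M₂).evalFrom ((unionDFA M₁ M₂).step q (Sum.inl a)) w).2 = none :=
            unionDFA_none₂ M₁ M₂ w _ (by simp [unionDFA])
          rw [show (unionDFA M₁ M₂).evalFrom q (Sum.inl a :: w)
            = (unionDFA M₁ M₂).evalFrom ((unionDFA M₁ M₂).step q (Sum.inl a)) w from rfl] at hs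
          rw [this] at hs
          exact nomatch hs
    exact gen _ _ _ h

lemma unionDFA_accepts {L₁ : Language A} {L₂ : Language B}
    (h₁ : M₁.accepts = L₁) (h₂ : M₂.accepts = L₂) :
    (unionDFA M₁ M₂).accepts = unionLang L₁ L₂ := by
  ext w
  rw [DFA.mem_accepts]
  constructor
  · rintro (⟨s, hs, hacc⟩ | ⟨s, hs, hacc⟩)
    · obtain ⟨u, rfl⟩ := unionDFA_fst_some M₁ M₂ w s hs
      have := unionDFA_evalFrom_inl M₁ M₂ u (unionDFA M₁ M₂).start
      rw [show (unionDFA M₁ M₂).eval (u.map Sum.inl)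
        = (unionDFA M₁ M₂).evalFrom (unionDFA M₁ M₂).start (u.map Sum.inl) from rfl, this] at hs
      simp only [unionDFA] at hs
      rw [show ((some M₁.start : Option σ₁).map fun s => M₁.evalFrom s u) = some (M₁.eval u) from rfl] at hs
      have hu : M₁.eval u ∈ M₁.accept := by
        cases hs; exact hacc
      have : u ∈ M₁.accepts := hu
      rw [h₁] at this
      exact Or.inl ⟨u, this, rfl⟩
    · obtain ⟨v, rfl⟩ := unionDFA_snd_some M₁ M₂ w s hs
      have := unionDFA_evalFrom_inr M₁ M₂ v (unionDFA M₁ M₂).start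
      rw [show (unionDFA M₁ M₂).eval (v.map Sum.inr)
        = (unionDFA M₁ M₂).evalFrom (unionDFA M₁ M₂).start (v.map Sum.inr) from rfl, this] at hs
      simp only [unionDFA] at hs
      rw [show ((some M₂.start : Option σ₂).map fun s => M₂.evalFrom s v) = some (M₂.eval v) from rfl] at hs
      have hv : M₂.eval v ∈ M₂.accept := by
        cases hs; exact hacc
      have : v ∈ M₂.accepts := hv
      rw [h₂] at this
      exact Or.inr ⟨v, this, rfl⟩
  · rintro (⟨u, hu, rfl⟩ | ⟨v, hv, rfl⟩)
    · left
      refine ⟨M₁.eval u, ?_, ?_⟩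
      · rw [show (unionDFA M₁ M₂).eval (u.map Sum.inl)
          = (unionDFA M₁ M₂).evalFrom (unionDFA M₁ M₂).start (u.map Sum.inl) from rfl,
          unionDFA_evalFrom_inl]
        rfl
      · rw [← h₁] at hu
        exact hu
    · right
      refine ⟨M₂.eval v, ?_, ?_⟩
      · rw [show (unionDFA M₁ M₂).eval (v.map Sum.inr)
          = (unionDFA M₁ M₂).evalFrom (unionDFA M₁ M₂).start (v.map Sum.inr) from rfl,
          unionDFA_evalFrom_inr]
        rfl
      · rw [← h₂] at hv
        exact hv

lemma unionLang_regular {L₁ : Language A} {L₂ : Language B}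
    (h₁ : IsRegular L₁) (h₂ : IsRegular L₂) : IsRegular (unionLang L₁ L₂) := by
  obtain ⟨σ₁, i₁, M₁, hM₁⟩ := h₁
  obtain ⟨σ₂, i₂, M₂, hM₂⟩ := h₂
  exact ⟨Option σ₁ × Option σ₂, inferInstance, unionDFA M₁ M₂, unionDFA_accepts M₁ M₂ hM₁ hM₂⟩

end UnionDFA

end Auto
namespace Auto

section Departure

variable {Λ G Γ : Type*} [Group G] [Finite Γ]

lemma exists_minRep {π : FreeMonoid Λ →* G} {L : Language Λ}
    (honto : ∀ g : G, ∃ w ∈ L, evalW π w = g) (g : G) :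
    ∃ w, (w ∈ L ∧ evalW π w = g) ∧ ∀ w' ∈ L, evalW π w' = g → w.length ≤ w'.length := by
  obtain ⟨w, hw, he⟩ := honto g
  have hS : {n | ∃ w, (w ∈ L ∧ evalW π w = g) ∧ w.length = n}.Nonempty :=
    ⟨w.length, w, ⟨hw, he⟩, rfl⟩
  obtain ⟨w₀, hw₀, hlen⟩ := Nat.sInf_mem hS
  refine ⟨w₀, hw₀, fun w' h1 h2 => ?_⟩
  rw [hlen]
  exact Nat.sInf_le ⟨w', ⟨h1, h2⟩, rfl⟩

lemma swap_shorter {π : FreeMonoid Λ →* G} {L : Language Λ} {σ : Type}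
    (M : DFA Λ σ) (hM : M.accepts = L)
    (w w' : List Λ) (hw' : w' ∈ L)
    (s t s' t' : ℕ) (h1 : s + t ≤ w.length) (h2 : s' + t' ≤ w'.length)
    (hq1 : M.eval (w'.take s') = M.eval (w.take s))
    (hq2 : M.eval (w.take (s + t)) = M.eval (w'.take (s' + t')))
    (hc : (evalW π (w.take s))⁻¹ * evalW π (w.take (s + t))
        = (evalW π (w'.take s'))⁻¹ * evalW π (w'.take (s' + t'))) :
    ∃ w'' ∈ L, evalW π w'' = evalW π w' ∧ w''.length + t' = w'.length + t := by
  set seg := (w.drop s).take t with hsegdef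
  have hsplit : w.take (s + t) = w.take s ++ seg := List.take_add
  have hsplit' : w'.take (s' + t') ++ w'.drop (s' + t') = w' := List.take_append_drop _ _
  refine ⟨w'.take s' ++ seg ++ w'.drop (s' + t'), ?_, ?_, ?_⟩
  · -- membership in L via the automaton
    rw [← hM, DFA.mem_accepts]
    have e1 : M.eval (w'.take s' ++ seg ++ w'.drop (s' + t'))
        = M.evalFrom (M.eval (w'.take s' ++ seg)) (w'.drop (s' + t')) := by
      rw [show M.eval (w'.take s' ++ seg ++ w'.drop (s' + t'))
        = M.evalFrom M.start ((w'.take s' ++ seg) ++ w'.drop (s' + t')) from rfl,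
        DFA.evalFrom_of_append]
      rfl
    have e2 : M.eval (w'.take s' ++ seg) = M.eval (w.take (s + t)) := by
      rw [hsplit]
      rw [show M.eval (w'.take s' ++ seg) = M.evalFrom M.start (w'.take s' ++ seg) from rfl,
        DFA.evalFrom_of_append,
        show M.eval (w.take s ++ seg) = M.evalFrom M.start (w.take s ++ seg) from rfl,
        DFA.evalFrom_of_append]
      rw [show M.evalFrom M.start (w'.take s') = M.eval (w'.take s') from rfl, hq1]
      rfl
    rw [e1, e2, hq2]
    have e3 : M.evalFrom (M.eval (w'.take (s' + t'))) (w'.drop (s' + t')) = M.eval w' := by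
      rw [show M.eval (w'.take (s' + t')) = M.evalFrom M.start (w'.take (s' + t')) from rfl,
        ← DFA.evalFrom_of_append, hsplit']
      rfl
    rw [e3]
    rw [← DFA.mem_accepts, hM]
    exact hw'
  · -- evaluation
    have eseg : evalW π seg = (evalW π (w.take s))⁻¹ * evalW π (w.take (s + t)) := by
      rw [hsplit, evalW_append]
      group
    rw [evalW_append, evalW_append, eseg, hc]
    have : evalW π (w'.take (s' + t')) * evalW π (w'.drop (s' + t')) = evalW π w' := by
      rw [← evalW_append, hsplit']
    rw [← this]
    group
  · -- length bookkeeping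
    have l1 : (w'.take s').length = s' := List.length_take_of_le (by omega)
    have l2 : seg.length = t := by
      rw [hsegdef, List.length_take, List.length_drop]
      omega
    have l3 : (w'.drop (s' + t')).length = w'.length - (s' + t') := List.length_drop
    simp only [List.length_append, l1, l2, l3]
    omega

lemma minRep_departure {π : FreeMonoid Λ →* G} {L : Language Λ} {σ : Type} [Fintype σ]
    (M : DFA Λ σ) (hM : M.accepts = L)
    {πm : FreeMonoid Γ →* G} (hsur : Function.Surjective πm)
    (R : G → List Λ)
    (hR : ∀ g : G, ((R g) ∈ L ∧ evalW π (R g) = g) ∧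
      ∀ w' ∈ L, evalW π w' = g → (R g).length ≤ w'.length)
    (r : ℕ) :
    ∃ D : ℕ, ∀ g s t, s + t ≤ (R g).length →
      wdist πm (evalW π ((R g).take s)) (evalW π ((R g).take (s + t))) ≤ r → t ≤ D := by
  classical
  set T : Set ℕ := {t | ∃ g s, s + t ≤ (R g).length ∧
    wdist πm (evalW π ((R g).take s)) (evalW π ((R g).take (s + t))) ≤ r} with hTdef
  suffices hfin : T.Finite by
    obtain ⟨D, hD⟩ := hfin.bddAbove
    exact ⟨D, fun g s t h1 h2 => hD ⟨g, s, h1, h2⟩⟩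
  have hwit : ∀ t ∈ T, ∃ gs : G × ℕ, gs.2 + t ≤ (R gs.1).length ∧
      wdist πm (evalW π ((R gs.1).take gs.2)) (evalW π ((R gs.1).take (gs.2 + t))) ≤ r := by
    rintro t ⟨g, s, hh1, hh2⟩
    exact ⟨(g, s), hh1, hh2⟩
  have hnσ : Nonempty σ := ⟨M.start⟩
  set dataF : ℕ → σ × σ × G := fun t =>
    if ht : t ∈ T then
      let g := (Classical.choose (hwit t ht)).1
      let s := (Classical.choose (hwit t ht)).2
      (M.eval ((R g).take s), M.eval ((R g).take (s + t)),
        (evalW π ((R g).take s))⁻¹ * evalW π ((R g).take (s + t)))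
    else (Classical.arbitrary σ, Classical.arbitrary σ, 1) with hdataF
  -- the image lies in a finite set
  have himg : (dataF '' T).Finite := by
    refine Set.Finite.subset (Set.Finite.prod (Set.finite_univ (α := σ))
      (Set.Finite.prod (Set.finite_univ (α := σ))
        (ball_finite (π := πm) r))) ?_
    rintro x ⟨t, ht, rfl⟩
    rw [hdataF]
    simp only [dif_pos ht]
    refine ⟨Set.mem_univ _, Set.mem_univ _, ?_, ?_⟩
    · obtain ⟨hh1, hh2⟩ := Classical.choose_spec (hwit t ht)
      rw [wdist_one] at hh2
      exact hh2
    · exact wset_nonempty hsur 1 _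
  -- injectivity on T via swapping
  have haux : ∀ t₁ ∈ T, ∀ t₂ ∈ T, dataF t₁ = dataF t₂ → t₁ < t₂ → False := by
    intro t₁ ht₁ t₂ ht₂ hdata hlt
    obtain ⟨hA1, hA2⟩ := Classical.choose_spec (hwit t₁ ht₁)
    obtain ⟨hB1, hB2⟩ := Classical.choose_spec (hwit t₂ ht₂)
    set g₁ := (Classical.choose (hwit t₁ ht₁)).1
    set s₁ := (Classical.choose (hwit t₁ ht₁)).2
    set g₂ := (Classical.choose (hwit t₂ ht₂)).1
    set s₂ := (Classical.choose (hwit t₂ ht₂)).2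
    rw [hdataF] at hdata
    simp only [dif_pos ht₁, dif_pos ht₂, Prod.mk.injEq] at hdata
    obtain ⟨e1, e2, e3⟩ := hdata
    obtain ⟨w'', hw''L, hw''e, hw''len⟩ := swap_shorter (π := π) M hM
      (R g₁) (R g₂) ((hR g₂).1.1) s₁ t₁ s₂ t₂ hA1 hB1 e1.symm e2 e3
    have hmin := (hR g₂).2 w'' hw''L (by rw [hw''e, (hR g₂).1.2])
    omega
  have hinj : Set.InjOn dataF T := by
    intro t₁ ht₁ t₂ ht₂ hdata
    rcases lt_trichotomy t₁ t₂ with h | h | h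
    · exact absurd (haux t₁ ht₁ t₂ ht₂ hdata h) (fun x => x)
    · exact h
    · exact absurd (haux t₂ ht₂ t₁ ht₁ hdata.symm h) (fun x => x)
  exact Set.Finite.of_finite_image himg hinj

end Departure

end Auto
namespace Auto

section Engine

/-- The bound produced by the staircase construction. -/
def stairBound (Da Db : ℕ → ℕ) (N' : ℕ) : ℕ :=
  max (Db N')
    (N' + (Db (2*N'+1) + 1) * (Da (2*N' + (Db (2*N'+1) + 1)) + 1) + (Db (2*N'+1) + 1))

lemma staircase {G : Type*} (d : G → G → ℕ)
    (dself : ∀ g, d g g = 0)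
    (dcomm : ∀ g h, d g h = d h g)
    (dtri : ∀ g h k, d g k ≤ d g h + d h k)
    (a b : ℕ → G) (La Lb : ℕ)
    (ha1 : ∀ n, d (a n) (a (n+1)) ≤ 1)
    (hb1 : ∀ n, d (b n) (b (n+1)) ≤ 1)
    (haC : ∀ n, La ≤ n → a n = a La)
    (hbC : ∀ n, Lb ≤ n → b n = b Lb)
    (hab0 : d (a 0) (b 0) = 0)
    (hend : d (a La) (b Lb) ≤ 1)
    (N' : ℕ) (hN' : 1 ≤ N')
    (hH : ∀ n, n ≤ La → ∃ m, m ≤ Lb ∧ d (a n) (b m) ≤ N')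
    (Da Db : ℕ → ℕ)
    (hDa : ∀ r n n', n ≤ La → n' ≤ La → n ≤ n' → d (a n) (a n') ≤ r → n' - n ≤ Da r)
    (hDb : ∀ r m m', m ≤ Lb → m' ≤ Lb → m ≤ m' → d (b m) (b m') ≤ r → m' - m ≤ Db r) :
    ∃ φ ψ : ℕ → ℕ, Monotone φ ∧ Monotone ψ ∧
      Function.Surjective φ ∧ Function.Surjective ψ ∧
      ∀ t, d (a (φ t)) (b (ψ t)) ≤ stairBound Da Db N' := by
  classical
  set K := Db (2*N'+1) + 1 with hK
  set Rc := Da (2*N' + K) with hRc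
  set E := K * (Rc + 1) with hE
  set J := Db N' with hJ
  have hKpos : 1 ≤ K := by omega
  have hEK : K ≤ E := by
    calc K = K * 1 := (mul_one K).symm
      _ ≤ K * (Rc + 1) := Nat.mul_le_mul_left K (by omega)
  -- Lipschitz property of b along indices
  have hbLip : ∀ m k, d (b m) (b (m + k)) ≤ k := by
    intro m k
    induction k with
    | zero => simpa using (dself (b m)).le
    | succ k ih =>
      have h1 : m + (k+1) = (m+k)+1 := rfl
      rw [h1]
      have h2 := dtri (b m) (b (m+k)) (b ((m+k)+1))
      have h3 := hb1 (m+k)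
      omega
  have hbLe : ∀ m m', m ≤ m' → d (b m) (b m') ≤ m' - m := by
    intro m m' h
    have := hbLip m (m' - m)
    rwa [Nat.add_sub_cancel' h] at this
  -- the choice function f
  set f : ℕ → ℕ := fun n => if h : n ≤ La then Classical.choose (hH n h) else Lb + (n - La)
    with hfdef
  have hf1 : ∀ n, d (a n) (b (f n)) ≤ N' := by
    intro n
    by_cases h : n ≤ La
    · rw [hfdef]; simp only [dif_pos h]
      exact (Classical.choose_spec (hH n h)).2
    · push_neg at h
      rw [hfdef]; simp only [dif_neg (not_le.mpr h)]
      have ha' : a n = a La := haC n (by omega)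
      have hb' : b (Lb + (n - La)) = b Lb := hbC _ (by omega)
      rw [ha', hb']
      exact le_trans hend hN'
  have hf2 : ∀ n, n ≤ La → f n ≤ Lb := by
    intro n h
    rw [hfdef]; simp only [dif_pos h]
    exact (Classical.choose_spec (hH n h)).1
  have hf3 : ∀ n, La < n → f n = Lb + (n - La) := by
    intro n h
    rw [hfdef]; simp only [dif_neg (not_le.mpr h)]
  -- single steps of f
  have hfstep : ∀ n, f (n+1) ≤ f n + K ∧ f n ≤ f (n+1) + K := by
    intro n
    by_cases h1 : n + 1 ≤ La
    · have h0 : n ≤ La := by omega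
      have hd : d (b (f n)) (b (f (n+1))) ≤ 2*N' + 1 := by
        have t1 := dtri (b (f n)) (a n) (b (f (n+1)))
        have t2 := dtri (a n) (a (n+1)) (b (f (n+1)))
        have t3 := dcomm (b (f n)) (a n)
        have t4 := hf1 n
        have t5 := hf1 (n+1)
        have t6 := ha1 n
        omega
      rcases le_total (f n) (f (n+1)) with hle | hle
      · have := hDb (2*N'+1) (f n) (f (n+1)) (hf2 n h0) (hf2 (n+1) h1) hle hd
        omega
      · have hd' : d (b (f (n+1))) (b (f n)) ≤ 2*N' + 1 := by rw [dcomm]; exact hd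
        have := hDb (2*N'+1) (f (n+1)) (f n) (hf2 (n+1) h1) (hf2 n h0) hle hd'
        omega
    · by_cases h0 : n ≤ La
      · -- n = La
        have hn : n = La := by omega
        have hfn1 : f (n+1) = Lb + 1 := by rw [hf3 (n+1) (by omega)]; omega
        have hfn : f n ≤ Lb := hf2 n h0
        have hd : d (b (f n)) (b Lb) ≤ 2*N' + 1 := by
          have t1 := dtri (b (f n)) (a La) (b Lb)
          have t2 := dcomm (b (f n)) (a La)
          have t4 : d (a La) (b (f n)) ≤ N' := by rw [← hn]; exact hf1 n
          omega
        have := hDb (2*N'+1) (f n) Lb hfn le_rfl hfn hd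
        omega
      · push_neg at h0
        have e1 : f (n+1) = Lb + (n + 1 - La) := hf3 (n+1) (by omega)
        have e2 : f n = Lb + (n - La) := hf3 n h0
        omega
  -- f is K-Lipschitz
  have hfLip : ∀ n k, f (n+k) ≤ f n + K * k ∧ f n ≤ f (n+k) + K * k := by
    intro n k
    induction k with
    | zero => simp
    | succ k ih =>
      have h1 : n + (k+1) = (n+k)+1 := rfl
      have h2 := hfstep (n+k)
      rw [h1]
      constructor
      · calc f ((n+k)+1) ≤ f (n+k) + K := h2.1
          _ ≤ f n + K * k + K := by omega
          _ = f n + K * (k+1) := by ring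
      · calc f n ≤ f (n+k) + K * k := ih.2
          _ ≤ f ((n+k)+1) + K + K * k := by omega
          _ = f ((n+k)+1) + K * (k+1) := by ring
  -- coarse monotonicity of f
  have hcoarse : ∀ n n', n ≤ n' → f n ≤ f n' + E := by
    intro n n' hnn'
    by_contra hcon
    push_neg at hcon
    have hnLa : n ≤ La := by
      by_contra hn
      push_neg at hn
      have e1 : f n = Lb + (n - La) := hf3 n hn
      have e2 : f n' = Lb + (n' - La) := hf3 n' (by omega)
      omega
    have hfnLb : f n ≤ Lb := hf2 n hnLa
    have hne : n < n' := by
      rcases Nat.lt_or_ge n n' with h | h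
      · exact h
      · have : n = n' := by omega
        subst this
        omega
    -- find the first return above f n - K after n'
    have hex : ∃ j, f n ≤ f (n' + 1 + j) + K := by
      refine ⟨La + f n, ?_⟩
      have : f (n' + 1 + (La + f n)) = Lb + (n' + 1 + (La + f n) - La) := hf3 _ (by omega)
      omega
    set j₀ := Nat.find hex with hj₀
    set n'' := n' + 1 + j₀ with hn''
    have hc1 : f n ≤ f n'' + K := Nat.find_spec hex
    have hc2 : f n'' < f n := by
      rcases Nat.eq_zero_or_pos j₀ with hz | hpos
      · have : n'' = n' + 1 := by omega
        rw [this]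
        have := (hfstep n').1
        omega
      · have hj1 : ¬ (f n ≤ f (n' + 1 + (j₀ - 1)) + K) := Nat.find_min hex (by omega)
        push_neg at hj1
        have hstep := (hfstep (n' + 1 + (j₀ - 1))).1
        have : n' + 1 + (j₀ - 1) + 1 = n'' := by omega
        rw [this] at hstep
        omega
    have hc3 : n'' ≤ La := by
      by_contra hcon3
      push_neg at hcon3
      have : f n'' = Lb + (n'' - La) := hf3 n'' hcon3
      omega
    have hc4 : d (a n) (a n'') ≤ 2*N' + K := by
      have t1 := dtri (a n) (b (f n)) (a n'')
      have t2 := dtri (b (f n)) (b (f n'')) (a n'')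
      have t3 : d (b (f n)) (b (f n'')) ≤ K := by
        have := hbLe (f n'') (f n) (by omega)
        have hcm := dcomm (b (f n'')) (b (f n))
        omega
      have t4 := hf1 n
      have t5 := hf1 n''
      have t6 := dcomm (b (f n'')) (a n'')
      omega
    have hc5 : n'' - n ≤ Rc := hDa (2*N' + K) n n'' hnLa hc3 (by omega) hc4
    have hc6 := (hfLip n (n' - n)).2
    rw [Nat.add_sub_cancel' hnn'] at hc6
    -- E < f n - f n' ≤ K * (n' - n), so n' - n > Rc + 1, contradicting hc5
    have hgt : K * (Rc + 1) < K * (n' - n) := by omega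
    have : Rc + 1 < n' - n := lt_of_mul_lt_mul_left hgt (Nat.zero_le K)
    omega
  -- the running maximum F
  set F : ℕ → ℕ := fun n => Nat.rec (f 0) (fun k Fk => max Fk (f (k+1))) n with hFdef
  have hF0 : F 0 = f 0 := rfl
  have hFs : ∀ n, F (n+1) = max (F n) (f (n+1)) := fun n => rfl
  have hFf : ∀ n, f n ≤ F n := by
    intro n
    cases n with
    | zero => exact le_of_eq hF0.symm
    | succ k => rw [hFs k]; exact le_max_right _ _
  have hFwit : ∀ n, ∃ m, m ≤ n ∧ F n = f m := by
    intro n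
    induction n with
    | zero => exact ⟨0, le_rfl, hF0⟩
    | succ k ih =>
      obtain ⟨m, hm, hFm⟩ := ih
      rw [hFs k]
      rcases le_total (F k) (f (k+1)) with h | h
      · exact ⟨k+1, le_rfl, by omega⟩
      · exact ⟨m, by omega, by omega⟩
  have hFle : ∀ n, F n ≤ f n + E := by
    intro n
    obtain ⟨m, hm, hFm⟩ := hFwit n
    rw [hFm]
    exact hcoarse m n hm
  have hFmono1 : ∀ n, F n ≤ F (n+1) := fun n => by rw [hFs n]; exact le_max_left _ _
  have hFmono : Monotone F := monotone_nat_of_le_succ hFmono1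
  have hFstep : ∀ n, F (n+1) ≤ F n + K := by
    intro n
    rw [hFs n]
    have := (hfstep n).1
    have := hFf n
    omega
  have hFd : ∀ n, d (a n) (b (F n)) ≤ N' + E := by
    intro n
    have t1 := dtri (a n) (b (f n)) (b (F n))
    have t2 := hbLe (f n) (F n) (hFf n)
    have t3 := hf1 n
    have t4 := hFle n
    omega
  have hFunb : ∀ m, ∃ n, m ≤ F n := by
    intro m
    refine ⟨La + 1 + m, ?_⟩
    have h1 : f (La + 1 + m) = Lb + (La + 1 + m - La) := hf3 _ (by omega)
    have := hFf (La + 1 + m)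
    omega
  -- bound on f 0
  have hf0J : f 0 ≤ J := by
    have t1 := dtri (b 0) (a 0) (b (f 0))
    have t2 := dcomm (b 0) (a 0)
    have t3 := hf1 0
    have hd : d (b 0) (b (f 0)) ≤ N' := by omega
    have := hDb N' 0 (f 0) (Nat.zero_le _) (hf2 0 (Nat.zero_le _)) (Nat.zero_le _) hd
    omega
  -- time schedule
  set T : ℕ → ℕ := fun n => n + F n with hTdef
  have hTstep : ∀ n, T n + 1 ≤ T (n+1) := by
    intro n
    have := hFmono1 n
    simp only [hTdef]
    omega
  have hTmono : StrictMono T := strictMono_nat_of_lt_succ (fun n => by have := hTstep n; omega)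
  have hTn : ∀ n, n ≤ T n := fun n => by simp only [hTdef]; omega
  have hT0 : T 0 = f 0 := by simp only [hTdef, hF0]; omega
  -- φ
  set φ : ℕ → ℕ := fun t => Nat.findGreatest (fun n => T n ≤ t) t with hφdef
  have hφ0 : ∀ t, t < T 0 → φ t = 0 := by
    intro t ht
    rw [hφdef]
    rw [Nat.findGreatest_eq_zero_iff]
    intro m _ _ hTm
    have := hTmono.monotone (Nat.zero_le m)
    omega
  have hφval : ∀ t, T 0 ≤ t → T (φ t) ≤ t := by
    intro t ht
    exact Nat.findGreatest_spec (P := fun n => T n ≤ t) (Nat.zero_le t) ht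
  have hφub : ∀ t n, T n ≤ t → n ≤ φ t := by
    intro t n h
    exact Nat.le_findGreatest (le_trans (hTn n) h) h
  have hφlt : ∀ t, t < T (φ t + 1) := by
    intro t
    by_contra h
    push_neg at h
    have := hφub t (φ t + 1) h
    omega
  have hφmono : Monotone φ := by
    intro t t' htt'
    by_cases h : T 0 ≤ t
    · exact hφub t' (φ t) (le_trans (hφval t h) htt')
    · push_neg at h
      rw [hφ0 t h]
      exact Nat.zero_le _
  have hφTn : ∀ n, φ (T n) = n := by
    intro n
    have h1 : n ≤ φ (T n) := hφub (T n) n le_rfl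
    have h2 : φ (T n) ≤ n := by
      by_contra hc
      push_neg at hc
      have h3 : T 0 ≤ T n := hTmono.monotone (Nat.zero_le n)
      have h4 := hφval (T n) h3
      have h5 : T (n+1) ≤ T (φ (T n)) := hTmono.monotone (by omega)
      have h7 := hTstep n
      omega
    omega
  have hφstep : ∀ t, φ (t+1) ≤ φ t + 1 := by
    intro t
    by_contra hc
    push_neg at hc
    have h0 : T 0 ≤ t + 1 := by
      by_contra h
      push_neg at h
      rw [hφ0 (t+1) h] at hc
      omega
    have h1 := hφval (t+1) h0
    have h2 : T (φ t + 2) ≤ T (φ (t+1)) := hTmono.monotone (by omega)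
    have h3 := hTstep (φ t + 1)
    have he2 : φ t + 1 + 1 = φ t + 2 := rfl
    rw [he2] at h3
    have h4 := hTstep (φ t)
    have h5 : T (φ t + 1) ≤ t := by omega
    have := hφub t (φ t + 1) h5
    omega
  -- ψ
  set ψ : ℕ → ℕ := fun t => if t < T 0 then t else F (φ t) + (t - T (φ t)) with hψdef
  have hψlo : ∀ t, t < T 0 → ψ t = t := fun t ht => by rw [hψdef]; simp [if_pos ht]
  have hψhi : ∀ t, T 0 ≤ t → ψ t = F (φ t) + (t - T (φ t)) := fun t ht => by
    rw [hψdef]; simp [if_neg (not_lt.mpr ht)]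
  -- main bound
  have hbound : ∀ t, d (a (φ t)) (b (ψ t)) ≤ stairBound Da Db N' := by
    intro t
    have hPform : stairBound Da Db N' = max J (N' + E + K) := by
      rw [stairBound, hJ, hE, hK, hRc]
    rw [hPform]
    by_cases ht : t < T 0
    · rw [hφ0 t ht, hψlo t ht]
      have t1 := dtri (a 0) (b 0) (b t)
      have t2 : d (b 0) (b t) ≤ t := by
        have := hbLip 0 t
        simpa using this
      have : t ≤ J := by
        rw [hT0] at ht
        omega
      have : d (a 0) (b t) ≤ J := by omega
      exact le_max_of_le_left this
    · push_neg at ht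
      rw [hψhi t ht]
      set n := φ t with hn
      have h1 : T n ≤ t := hφval t ht
      have h2 : t < T (n+1) := hφlt t
      have h3 : F n + (t - T n) ≤ F (n+1) := by
        have e1 : T (n+1) = (n+1) + F (n+1) := rfl
        have e2 : T n = n + F n := rfl
        omega
      have h4 := hFstep n
      have t1 := dtri (a n) (b (F n)) (b (F n + (t - T n)))
      have t2 := hbLip (F n) (t - T n)
      have t3 := hFd n
      have : d (a n) (b (F n + (t - T n))) ≤ N' + E + K := by omega
      exact le_max_of_le_right this
  -- steps of ψ
  have hψstep : ∀ t, ψ t ≤ ψ (t+1) ∧ ψ (t+1) ≤ ψ t + 1 := by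
    intro t
    by_cases h1 : t + 1 < T 0
    · rw [hψlo t (by omega), hψlo (t+1) h1]
      omega
    · push_neg at h1
      by_cases h2 : t < T 0
      · -- t + 1 = T 0
        have he : t + 1 = T 0 := by omega
        have hφ1 : φ (t+1) = 0 := by rw [he, hφTn 0]
        rw [hψlo t h2, hψhi (t+1) h1, hφ1]
        have e : T 0 = F 0 := by show 0 + F 0 = F 0; omega
        omega
      · push_neg at h2
        rw [hψhi t h2, hψhi (t+1) (by omega)]
        have hst := hφstep t
        have hmn : φ t ≤ φ (t+1) := hφmono (by omega)
        rcases Nat.lt_or_ge (φ (t+1)) (φ t + 1) with hlt | hge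
        · have heq : φ (t+1) = φ t := by omega
          rw [heq]
          have h1' := hφval t h2
          omega
        · have heq : φ (t+1) = φ t + 1 := by omega
          rw [heq]
          have ha' : T (φ t + 1) ≤ t + 1 := by
            have := hφval (t+1) (by omega)
            rw [heq] at this
            exact this
          have hb' : t < T (φ t + 1) := hφlt t
          have he' : t + 1 = T (φ t + 1) := by omega
          have e1 : T (φ t + 1) = (φ t + 1) + F (φ t + 1) := rfl
          have e2 : T (φ t) = φ t + F (φ t) := rfl
          have e3 := hFmono1 (φ t)
          have e4 := hφval t h2
          omega
  have hψmono : Monotone ψ := monotone_nat_of_le_succ (fun t => (hψstep t).1)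
  have hψ0 : ψ 0 = 0 := by
    by_cases h : 0 < T 0
    · exact hψlo 0 h
    · push_neg at h
      have hT00 : T 0 = 0 := by omega
      rw [hψhi 0 (by omega)]
      have : φ 0 = 0 := by
        have := hφTn 0
        rwa [hT00] at this
      rw [this, hT00]
      have : T 0 = 0 + F 0 := rfl
      omega
  have hψunb : ∀ m, ∃ t, m ≤ ψ t := by
    intro m
    obtain ⟨n, hn⟩ := hFunb m
    refine ⟨T n, ?_⟩
    have hT0n : T 0 ≤ T n := hTmono.monotone (Nat.zero_le n)
    rw [hψhi (T n) hT0n, hφTn n]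
    omega
  have hψsurj : Function.Surjective ψ := by
    intro m
    induction m with
    | zero => exact ⟨0, hψ0⟩
    | succ m ih =>
      obtain ⟨t, ht⟩ := ih
      have hex : ∃ s, m + 1 ≤ ψ (t + s) := by
        obtain ⟨t₀, ht₀⟩ := hψunb (m+1)
        exact ⟨t₀, le_trans ht₀ (hψmono (by omega))⟩
      obtain ⟨s₀, hspec, hmin⟩ : ∃ s, (m + 1 ≤ ψ (t + s)) ∧ ∀ s' < s, ¬ (m + 1 ≤ ψ (t + s')) :=
        ⟨Nat.find hex, Nat.find_spec hex, fun s' hs' => Nat.find_min hex hs'⟩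
      cases s₀ with
      | zero =>
        exfalso
        simp only [Nat.add_zero] at hspec
        omega
      | succ s =>
        have hm := hmin s (Nat.lt_succ_self s)
        push_neg at hm
        have hstep := (hψstep (t + s)).2
        have he : t + s + 1 = t + (s + 1) := rfl
        rw [he] at hstep
        exact ⟨t + (s + 1), by omega⟩
  have hφsurj : Function.Surjective φ := fun n => ⟨T n, hφTn n⟩
  exact ⟨φ, ψ, hφmono, hψmono, hφsurj, hψsurj, hbound⟩

end Engine

end Auto
/-- Two automatic structures `L₁` and `L₂` for the same group `G` are
equivalent if and only if `L₁ ∪ L₂` has the Hausdorff closeness property. -/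
theorem equivalent_iff_hausclose {A B G : Type*} [Fintype A] [Fintype B] [Group G]
    (π₁ : FreeMonoid A →* G) (hπ₁ : Function.Surjective π₁)
    (π₂ : FreeMonoid B →* G) (hπ₂ : Function.Surjective π₂)
    (L₁ : Language A) (L₂ : Language B)
    (h₁ : IsAutomaticStructure π₁ L₁) (h₂ : IsAutomaticStructure π₂ L₂) :
    LangEquivalent π₁ π₂ L₁ L₂ ↔ HausClose (sumHom π₁ π₂) (unionLang L₁ L₂) := by
  constructor
  · rintro ⟨hreg, honto, p, hp⟩
    refine ⟨p, fun u hu v hv hd => ?_⟩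
    obtain ⟨φ, ψ, hφm, hψm, hφs, hψs, hfar⟩ := hp u hu v hv hd
    constructor
    · rintro x ⟨n, rfl⟩
      obtain ⟨t, rfl⟩ := hφs n
      exact ⟨_, ⟨ψ t, rfl⟩, hfar t⟩
    · rintro x ⟨m, rfl⟩
      obtain ⟨t, rfl⟩ := hψs m
      exact ⟨_, ⟨φ t, rfl⟩, by rw [wdist_comm]; exact hfar t⟩
  · intro hHC
    classical
    obtain ⟨N, hN⟩ := hHC
    have hsur₃ : Function.Surjective (sumHom π₁ π₂) := sumHom_surjective π₁ π₂ hπ₁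
    obtain ⟨N₁, hft₁⟩ := h₁.ft
    obtain ⟨N₂, hft₂⟩ := h₂.ft
    obtain ⟨σ₁, i₁, M₁, hM₁⟩ := h₁.regular
    obtain ⟨σ₂, i₂, M₂, hM₂⟩ := h₂.regular
    choose R₁ hR₁ using fun g => exists_minRep (π := π₁) (L := L₁) h₁.onto g
    choose R₂ hR₂ using fun g => exists_minRep (π := π₂) (L := L₂) h₂.onto g
    choose D₁ hD₁ using fun r =>
      minRep_departure (Γ := A ⊕ B) M₁ hM₁ (πm := sumHom π₁ π₂) hsur₃ R₁ hR₁ r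
    choose D₂ hD₂ using fun r =>
      minRep_departure (Γ := A ⊕ B) M₂ hM₂ (πm := sumHom π₁ π₂) hsur₃ R₂ hR₂ r
    set π₃ := sumHom π₁ π₂ with hπ₃def
    set D : ℕ → ℕ := fun r => max (D₁ r) (D₂ r) with hDdef
    set N' : ℕ := max N 1 with hN'def
    set Ns : ℕ := max N₁ N₂ with hNsdef
    set P : ℕ := stairBound D D N' with hPdef
    -- a canonical tame representative for each word of the union language
    have key : ∀ w ∈ unionLang L₁ L₂, ∃ w' ∈ unionLang L₁ L₂,
        evalW π₃ w' = evalW π₃ w ∧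
        (∀ k, wdist π₃ (evalW π₃ (w.take k)) (evalW π₃ (w'.take k)) ≤ Ns) ∧
        (∀ r s t, s + t ≤ w'.length →
          wdist π₃ (evalW π₃ (w'.take s)) (evalW π₃ (w'.take (s + t))) ≤ r → t ≤ D r) := by
      rintro w (⟨u₁, hu₁, rfl⟩ | ⟨u₂, hu₂, rfl⟩)
      · set g := evalW π₁ u₁ with hg
        set α := R₁ g with hα
        refine ⟨α.map Sum.inl, Or.inl ⟨α, (hR₁ g).1.1, rfl⟩, ?_, ?_, ?_⟩
        · rw [evalW_map_inl, evalW_map_inl, (hR₁ g).1.2]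
        · intro k
          have hft := hft₁ u₁ hu₁ α (hR₁ g).1.1 (by
            rw [(hR₁ g).1.2, ← hg, wdist_self]; exact Nat.zero_le 1)
          have hk := hft k
          have hk' : wdist π₁ (evalW π₁ (u₁.take k)) (evalW π₁ (α.take k)) ≤ N₁ := by
            exact_mod_cast hk
          have e1 : ((u₁.map Sum.inl : List (A ⊕ B))).take k = (u₁.take k).map Sum.inl := by rw [List.map_take]
          have e2 : ((α.map Sum.inl : List (A ⊕ B))).take k = (α.take k).map Sum.inl := by rw [List.map_take]
          rw [e1, e2, evalW_map_inl, evalW_map_inl]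
          refine le_trans (le_trans (wdist_le_of_gens_subset (gens_inl_subset π₁ π₂) hπ₁ _ _) hk') ?_
          exact le_max_left _ _
        · intro r s t hst hw
          have e1 : ((α.map Sum.inl : List (A ⊕ B))).take s = (α.take s).map Sum.inl := by rw [List.map_take]
          have e2 : ((α.map Sum.inl : List (A ⊕ B))).take (s+t) = (α.take (s+t)).map Sum.inl := by rw [List.map_take]
          rw [e1, e2, evalW_map_inl, evalW_map_inl] at hw
          have hlen : s + t ≤ (R₁ g).length := by
            have h2 : ((α.map Sum.inl : List (A ⊕ B))).length = α.length := List.length_map _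
            rw [← hα]
            omega
          exact le_trans (hD₁ r g s t hlen hw) (le_max_left _ _)
      · set g := evalW π₂ u₂ with hg
        set α := R₂ g with hα
        refine ⟨α.map Sum.inr, Or.inr ⟨α, (hR₂ g).1.1, rfl⟩, ?_, ?_, ?_⟩
        · rw [evalW_map_inr, evalW_map_inr, (hR₂ g).1.2]
        · intro k
          have hft := hft₂ u₂ hu₂ α (hR₂ g).1.1 (by
            rw [(hR₂ g).1.2, ← hg, wdist_self]; exact Nat.zero_le 1)
          have hk := hft k
          have hk' : wdist π₂ (evalW π₂ (u₂.take k)) (evalW π₂ (α.take k)) ≤ N₂ := by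
            exact_mod_cast hk
          have e1 : ((u₂.map Sum.inr : List (A ⊕ B))).take k = (u₂.take k).map Sum.inr := by rw [List.map_take]
          have e2 : ((α.map Sum.inr : List (A ⊕ B))).take k = (α.take k).map Sum.inr := by rw [List.map_take]
          rw [e1, e2, evalW_map_inr, evalW_map_inr]
          refine le_trans (le_trans (wdist_le_of_gens_subset (gens_inr_subset π₁ π₂) hπ₂ _ _) hk') ?_
          exact le_max_right _ _
        · intro r s t hst hw
          have e1 : ((α.map Sum.inr : List (A ⊕ B))).take s = (α.take s).map Sum.inr := by rw [List.map_take]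
          have e2 : ((α.map Sum.inr : List (A ⊕ B))).take (s+t) = (α.take (s+t)).map Sum.inr := by rw [List.map_take]
          rw [e1, e2, evalW_map_inr, evalW_map_inr] at hw
          have hlen : s + t ≤ (R₂ g).length := by
            have h2 : ((α.map Sum.inr : List (A ⊕ B))).length = α.length := List.length_map _
            rw [← hα]
            omega
          exact le_trans (hD₂ r g s t hlen hw) (le_max_right _ _)
    refine ⟨unionLang_regular h₁.regular h₂.regular, ?_, Ns + (P + Ns), ?_⟩
    · intro g
      obtain ⟨w, hw, he⟩ := h₁.onto g
      exact ⟨w.map Sum.inl, Or.inl ⟨w, hw, rfl⟩, by rw [evalW_map_inl]; exact he⟩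
    · intro u hu v hv hd
      obtain ⟨u', hu', hu'e, hu'sync, hu'dep⟩ := key u hu
      obtain ⟨v', hv', hv'e, hv'sync, hv'dep⟩ := key v hv
      set a : ℕ → G := fun n => evalW π₃ (u'.take n) with hadef
      set b : ℕ → G := fun m => evalW π₃ (v'.take m) with hbdef
      set La := u'.length with hLa
      set Lb := v'.length with hLb
      have hd' : wdist π₃ (evalW π₃ u') (evalW π₃ v') ≤ 1 := by
        rw [hu'e, hv'e]; exact hd
      have hHC' := hN u' hu' v' hv' hd'
      obtain ⟨φ, ψ, hφm, hψm, hφs, hψs, hstair⟩ :=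
        staircase (wdist π₃) (wdist_self π₃) (wdist_comm π₃) (wdist_triangle hsur₃)
          a b La Lb
          (fun n => path_step π₃ u' n) (fun m => path_step π₃ v' m)
          (fun n hn => by
            rw [hadef]
            simp only
            rw [List.take_of_length_le hn, List.take_of_length_le le_rfl])
          (fun m hm => by
            rw [hbdef]
            simp only
            rw [List.take_of_length_le hm, List.take_of_length_le le_rfl])
          (by
            rw [hadef, hbdef]
            simp only [List.take_zero, evalW_nil]
            exact wdist_self π₃ 1)
          (by
            rw [hadef, hbdef]
            simp only
            rw [List.take_of_length_le le_rfl, List.take_of_length_le le_rfl]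
            exact hd')
          N' (le_max_right _ _)
          (fun n _ => by
            obtain ⟨y, ⟨m, rfl⟩, hy⟩ := hHC'.1 (a n) ⟨n, rfl⟩
            by_cases hm : m ≤ Lb
            · exact ⟨m, hm, le_trans hy (le_max_left _ _)⟩
            · refine ⟨Lb, le_rfl, ?_⟩
              push_neg at hm
              have : v'.take m = v'.take Lb := by
                rw [List.take_of_length_le (by omega), List.take_of_length_le le_rfl]
              rw [hbdef]
              simp only
              rw [← this]
              exact le_trans hy (le_max_left _ _))
          D D
          (fun r n n' hn hn' hnn' hdist => by
            have := hu'dep r n (n' - n) (by omega)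
            rw [Nat.add_sub_cancel' hnn'] at this
            exact this hdist)
          (fun r m m' hm hm' hmm' hdist => by
            have := hv'dep r m (m' - m) (by omega)
            rw [Nat.add_sub_cancel' hmm'] at this
            exact this hdist)
      refine ⟨φ, ψ, hφm, hψm, hφs, hψs, fun t => ?_⟩
      rw [← hπ₃def]
      have t4 := hstair t
      simp only [hadef, hbdef] at t4
      have t3 := hu'sync (φ t)
      have t5 : wdist π₃ (evalW π₃ (v'.take (ψ t))) (evalW π₃ (v.take (ψ t))) ≤ Ns := by
        rw [wdist_comm]
        exact hv'sync (ψ t)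
      have t1 := wdist_triangle hsur₃ (evalW π₃ (u.take (φ t))) (evalW π₃ (u'.take (φ t)))
        (evalW π₃ (v.take (ψ t)))
      have t2 := wdist_triangle hsur₃ (evalW π₃ (u'.take (φ t))) (evalW π₃ (v'.take (ψ t)))
        (evalW π₃ (v.take (ψ t)))
      have hP := hPdef
      omega
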